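/- Let 𝒳 and 𝒴 be hereditary classes of finite simple graphs and let d ∈ ℕ. Suppose 𝒴 admits an implicit representation and that every graph G ∈ 𝒳 with at least one vertex contains a non-empty vertex subset A with the following properties: (1) the subgraph of G induced by A belongs to 𝒴; (2) V(G) \ A can be partitioned into two sets B₁ and B₂ such that no edge of G joins a vertex of B₁ to a vertex of B₂; and (3) every vertex of A has at most d neighbours or at most d non-neighbours in B₁, and at most d neighbours or at most d non-neighbours in B₂. Then 𝒳 admits an implicit representation. -/

import Mathlib

open SimpleGraph

/-- A class of finite simple graphs, given by its members on the concrete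
vertex sets `Fin n`. -/
abbrev GraphClass : Type := ∀ n : ℕ, SimpleGraph (Fin n) → Prop

/-- A class is hereditary if it is closed under induced subgraphs
(and hence under isomorphism). -/
def Hereditary (C : GraphClass) : Prop :=
  ∀ {n m : ℕ} (G : SimpleGraph (Fin n)) (H : SimpleGraph (Fin m)),
    C n G → Nonempty (H ↪g G) → C m H

/-- A class `C` admits an implicit representation: there are a constant `c` and a
decoder `D` such that every `n`-vertex graph in `C` (with `n ≥ 2`) has an injective
labeling of its vertices by labels in `Fin (n ^ c)` from which adjacency can be
decoded by `D`. -/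
def AdmitsImplicit (C : GraphClass) : Prop :=
  ∃ (c : ℕ) (D : ℕ → ℕ → Prop),
    ∀ n : ℕ, 2 ≤ n → ∀ G : SimpleGraph (Fin n), C n G →
      ∃ ℓ : Fin n → Fin (n ^ c), Function.Injective ℓ ∧
        ∀ u v : Fin n, u ≠ v → (G.Adj u v ↔ D (ℓ u).val (ℓ v).val)

namespace S2

/-- Encode a list of naturals into one natural via iterated pairing. -/
def evec : List ℕ → ℕ
  | [] => 0
  | a :: t => Nat.pair a (evec t)

/-- Extract the `i`-th field of an encoded list. -/
def fld (i a : ℕ) : ℕ := ((fun x => x.unpair.2)^[i] a).unpair.1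

lemma fld_evec (L : List ℕ) (i : ℕ) : fld i (evec L) = L.getD i 0 := by
  induction L generalizing i with
  | nil =>
    induction i with
    | zero => simp [fld, evec, Nat.unpair_zero]
    | succ n ih =>
      simp only [fld, Function.iterate_succ_apply, evec] at *
      simpa [Nat.unpair_zero] using ih
  | cons a t ih =>
    cases i with
    | zero => simp [fld, evec, Nat.unpair_pair]
    | succ n =>
      simp only [fld, Function.iterate_succ_apply, evec, Nat.unpair_pair]
      exact ih n

lemma evec_lt {L : List ℕ} {F : ℕ} (h : ∀ x ∈ L, x ≤ F) :
    evec L < (F + 1) ^ (2 ^ L.length) := by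
  induction L with
  | nil => simpa [evec] using Nat.one_le_pow _ _ (Nat.succ_pos F)
  | cons a t ih =>
    have ha : a ≤ F := h a (by simp)
    have ht : evec t < (F + 1) ^ (2 ^ t.length) := ih (fun x hx => h x (by simp [hx]))
    have h1 : (F : ℕ) + 1 ≤ (F + 1) ^ (2 ^ t.length) :=
      Nat.le_self_pow (Nat.two_pow_pos t.length).ne' _
    have hmax : max a (evec t) + 1 ≤ (F + 1) ^ (2 ^ t.length) := by omega
    calc evec (a :: t) = Nat.pair a (evec t) := rfl
      _ < (max a (evec t) + 1) ^ 2 := Nat.pair_lt_max_add_one_sq a (evec t)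
      _ ≤ ((F + 1) ^ (2 ^ t.length)) ^ 2 := Nat.pow_le_pow_left hmax 2
      _ = (F + 1) ^ (2 ^ t.length * 2) := by rw [pow_mul]
      _ = (F + 1) ^ (2 ^ (a :: t).length) := by rw [List.length_cons, pow_succ]





open Classical in
/-- The decoder. -/
noncomputable def Dec (d : ℕ) (DY : ℕ → ℕ → Prop) (a b : ℕ) : Prop :=
  if fld 1 a = fld 1 b then DY (fld 8 a) (fld 8 b)
  else if fld 2 a ≤ fld 0 b ∧ fld 0 b < fld 3 a then
    ((∃ i < d, fld (9 + i) a = fld 0 b + 1) ↔ fld 6 a = 0)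
  else if fld 4 a ≤ fld 0 b ∧ fld 0 b < fld 5 a then
    ((∃ i < d, fld (9 + d + i) a = fld 0 b + 1) ↔ fld 7 a = 0)
  else if fld 2 b ≤ fld 0 a ∧ fld 0 a < fld 3 b then
    ((∃ i < d, fld (9 + i) b = fld 0 a + 1) ↔ fld 6 b = 0)
  else if fld 4 b ≤ fld 0 a ∧ fld 0 a < fld 5 b then
    ((∃ i < d, fld (9 + d + i) b = fld 0 a + 1) ↔ fld 7 b = 0)
  else False

variable {d : ℕ} {DY : ℕ → ℕ → Prop} {a b : ℕ}

lemma Dec_eq1 (h : fld 1 a = fld 1 b) :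
    Dec d DY a b ↔ DY (fld 8 a) (fld 8 b) := by
  rw [Dec, if_pos h]

lemma Dec_eq2 (h1 : fld 1 a ≠ fld 1 b) (h2 : fld 2 a ≤ fld 0 b) (h3 : fld 0 b < fld 3 a) :
    Dec d DY a b ↔ ((∃ i < d, fld (9 + i) a = fld 0 b + 1) ↔ fld 6 a = 0) := by
  rw [Dec, if_neg h1, if_pos ⟨h2, h3⟩]

lemma Dec_eq3 (h1 : fld 1 a ≠ fld 1 b) (h2 : ¬(fld 2 a ≤ fld 0 b ∧ fld 0 b < fld 3 a))
    (h3 : fld 4 a ≤ fld 0 b) (h4 : fld 0 b < fld 5 a) :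
    Dec d DY a b ↔ ((∃ i < d, fld (9 + d + i) a = fld 0 b + 1) ↔ fld 7 a = 0) := by
  rw [Dec, if_neg h1, if_neg h2, if_pos ⟨h3, h4⟩]

lemma Dec_eq4 (h1 : fld 1 a ≠ fld 1 b) (h2 : ¬(fld 2 a ≤ fld 0 b ∧ fld 0 b < fld 3 a))
    (h3 : ¬(fld 4 a ≤ fld 0 b ∧ fld 0 b < fld 5 a))
    (h4 : fld 2 b ≤ fld 0 a) (h5 : fld 0 a < fld 3 b) :
    Dec d DY a b ↔ ((∃ i < d, fld (9 + i) b = fld 0 a + 1) ↔ fld 6 b = 0) := by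
  rw [Dec, if_neg h1, if_neg h2, if_neg h3, if_pos ⟨h4, h5⟩]

lemma Dec_eq5 (h1 : fld 1 a ≠ fld 1 b) (h2 : ¬(fld 2 a ≤ fld 0 b ∧ fld 0 b < fld 3 a))
    (h3 : ¬(fld 4 a ≤ fld 0 b ∧ fld 0 b < fld 5 a))
    (h4 : ¬(fld 2 b ≤ fld 0 a ∧ fld 0 a < fld 3 b))
    (h5 : fld 4 b ≤ fld 0 a) (h6 : fld 0 a < fld 5 b) :
    Dec d DY a b ↔ ((∃ i < d, fld (9 + d + i) b = fld 0 a + 1) ↔ fld 7 b = 0) := by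
  rw [Dec, if_neg h1, if_neg h2, if_neg h3, if_neg h4, if_pos ⟨h5, h6⟩]

lemma Dec_false (h1 : fld 1 a ≠ fld 1 b) (h2 : ¬(fld 2 a ≤ fld 0 b ∧ fld 0 b < fld 3 a))
    (h3 : ¬(fld 4 a ≤ fld 0 b ∧ fld 0 b < fld 5 a))
    (h4 : ¬(fld 2 b ≤ fld 0 a ∧ fld 0 a < fld 3 b))
    (h5 : ¬(fld 4 b ≤ fld 0 a ∧ fld 0 a < fld 5 b)) :
    ¬ Dec d DY a b := by
  rw [Dec, if_neg h1, if_neg h2, if_neg h3, if_neg h4, if_neg h5]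
  exact id

/-- The label of a vertex in the `A`-part. -/
def mkL (d p l s1 e1 s2 e2 b1 b2 y : ℕ) (E1 E2 : ℕ → ℕ) : ℕ :=
  evec ([p, l, s1, e1, s2, e2, b1, b2, y]
    ++ (List.ofFn fun i : Fin d => E1 i) ++ (List.ofFn fun i : Fin d => E2 i))

variable {p l s1 e1 s2 e2 b1 b2 y : ℕ} {E1 E2 : ℕ → ℕ}

lemma fld_mkL0 : fld 0 (mkL d p l s1 e1 s2 e2 b1 b2 y E1 E2) = p := by
  rw [mkL, fld_evec]; rfl
lemma fld_mkL1 : fld 1 (mkL d p l s1 e1 s2 e2 b1 b2 y E1 E2) = l := by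
  rw [mkL, fld_evec]; rfl
lemma fld_mkL2 : fld 2 (mkL d p l s1 e1 s2 e2 b1 b2 y E1 E2) = s1 := by
  rw [mkL, fld_evec]; rfl
lemma fld_mkL3 : fld 3 (mkL d p l s1 e1 s2 e2 b1 b2 y E1 E2) = e1 := by
  rw [mkL, fld_evec]; rfl
lemma fld_mkL4 : fld 4 (mkL d p l s1 e1 s2 e2 b1 b2 y E1 E2) = s2 := by
  rw [mkL, fld_evec]; rfl
lemma fld_mkL5 : fld 5 (mkL d p l s1 e1 s2 e2 b1 b2 y E1 E2) = e2 := by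
  rw [mkL, fld_evec]; rfl
lemma fld_mkL6 : fld 6 (mkL d p l s1 e1 s2 e2 b1 b2 y E1 E2) = b1 := by
  rw [mkL, fld_evec]; rfl
lemma fld_mkL7 : fld 7 (mkL d p l s1 e1 s2 e2 b1 b2 y E1 E2) = b2 := by
  rw [mkL, fld_evec]; rfl
lemma fld_mkL8 : fld 8 (mkL d p l s1 e1 s2 e2 b1 b2 y E1 E2) = y := by
  rw [mkL, fld_evec]; rfl

lemma fld_mkL_E1 {i : ℕ} (hi : i < d) :
    fld (9 + i) (mkL d p l s1 e1 s2 e2 b1 b2 y E1 E2) = E1 i := by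
  rw [mkL, fld_evec, List.append_assoc]
  rw [List.getD_append_right _ _ _ _ (by simp)]
  simp only [List.length_cons, List.length_nil]
  have h9 : 9 + i - 9 = i := by omega
  rw [h9, List.getD_append _ _ _ _ (by simpa using hi)]
  rw [List.getD_eq_getElem _ _ (by simpa using hi), List.getElem_ofFn]

lemma fld_mkL_E2 {i : ℕ} (hi : i < d) :
    fld (9 + d + i) (mkL d p l s1 e1 s2 e2 b1 b2 y E1 E2) = E2 i := by
  rw [mkL, fld_evec, List.append_assoc]
  rw [List.getD_append_right _ _ _ _ (by simp; omega)]
  simp only [List.length_cons, List.length_nil]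
  have h9 : 9 + d + i - 9 = d + i := by omega
  rw [h9, List.getD_append_right _ _ _ _ (by simp)]
  rw [List.length_ofFn]
  have hd : d + i - d = i := by omega
  rw [hd, List.getD_eq_getElem _ _ (by simpa using hi), List.getElem_ofFn]

lemma mkL_lt {F : ℕ} (hp : p ≤ F) (hl : l ≤ F) (hs1 : s1 ≤ F) (he1 : e1 ≤ F)
    (hs2 : s2 ≤ F) (he2 : e2 ≤ F) (hb1 : b1 ≤ F) (hb2 : b2 ≤ F) (hy : y ≤ F)
    (hE1 : ∀ i, E1 i ≤ F) (hE2 : ∀ i, E2 i ≤ F) :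
    mkL d p l s1 e1 s2 e2 b1 b2 y E1 E2 < (F + 1) ^ 2 ^ (9 + 2 * d) := by
  have hlen : ([p, l, s1, e1, s2, e2, b1, b2, y]
      ++ (List.ofFn fun i : Fin d => E1 i) ++ (List.ofFn fun i : Fin d => E2 i)).length
      = 9 + 2 * d := by
    simp [List.length_append]; omega
  have h := evec_lt (L := [p, l, s1, e1, s2, e2, b1, b2, y]
      ++ (List.ofFn fun i : Fin d => E1 i) ++ (List.ofFn fun i : Fin d => E2 i)) (F := F) ?_
  · rwa [hlen] at h
  · intro x hx
    simp only [List.mem_append, List.mem_ofFn, List.mem_cons, List.not_mem_nil, or_false,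
      Set.mem_range] at hx
    rcases hx with ((h|h|h|h|h|h|h|h|h) | ⟨i, rfl⟩) | ⟨i, rfl⟩ <;>
      first | (subst h; assumption) | (apply hE1) | (apply hE2)

lemma Bnd_mono (cY K : ℕ) {m m' : ℕ} (h : m ≤ m') :
    (m + m ^ cY + 1) ^ K ≤ (m' + m' ^ cY + 1) ^ K :=
  Nat.pow_le_pow_left (by have := Nat.pow_le_pow_left h cY; omega) K



lemma exists_exc {n d : ℕ} (S : Set (Fin n)) (hS : S.ncard ≤ d) (pos : Fin n → ℕ) :
    ∃ E : ℕ → ℕ, (∀ i, E i = 0 ∨ ∃ w ∈ S, E i = pos w + 1) ∧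
      (∀ w ∈ S, ∃ i < d, E i = pos w + 1) := by
  classical
  have hfin : S.Finite := S.toFinite
  set L := hfin.toFinset.toList with hL
  have hlen : L.length ≤ d := by
    rw [hL, Finset.length_toList, ← Set.ncard_eq_toFinset_card S hfin]; exact hS
  refine ⟨fun i => if h : i < L.length then pos (L.get ⟨i, h⟩) + 1 else 0, ?_, ?_⟩
  · intro i
    by_cases h : i < L.length
    · right
      refine ⟨L.get ⟨i, h⟩, ?_, by simp only [dif_pos h]⟩
      have hmem : L.get ⟨i, h⟩ ∈ hfin.toFinset := by
        have := List.get_mem L ⟨i, h⟩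
        exact Finset.mem_toList.mp this
      exact (Set.Finite.mem_toFinset hfin).mp hmem
    · left; simp only [dif_neg h]
  · intro w hw
    have hwL : w ∈ L := by
      rw [hL, Finset.mem_toList, Set.Finite.mem_toFinset]; exact hw
    obtain ⟨i, hi⟩ := List.get_of_mem hwL
    refine ⟨i, lt_of_lt_of_le i.2 hlen, ?_⟩
    simp only [Fin.is_lt, dif_pos, Fin.eta, hi]

/-- Embedding of `Fin B.ncard` into `Fin n` through a subset `B`. -/
def subEmb {n : ℕ} (B : Set (Fin n)) (e : ↥B ≃ Fin B.ncard) : Fin B.ncard ↪ Fin n :=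
  ⟨fun i => (e.symm i : Fin n), fun i j h => e.symm.injective (Subtype.ext h)⟩

lemma comap_subEmb_adj {n : ℕ} (G : SimpleGraph (Fin n)) (B : Set (Fin n))
    (e : ↥B ≃ Fin B.ncard) (u v : ↥B) :
    (G.comap (subEmb B e)).Adj (e u) (e v) ↔ G.Adj u v := by
  show G.Adj ((e.symm (e u) : ↥B) : Fin n) ((e.symm (e v) : ↥B) : Fin n) ↔ G.Adj u v
  simp [subEmb, comap_adj, Equiv.symm_apply_apply]

lemma key (X Y : GraphClass) (hX : Hereditary X) (d cY : ℕ) (DY : ℕ → ℕ → Prop)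
    (hDY : ∀ n : ℕ, 2 ≤ n → ∀ G : SimpleGraph (Fin n), Y n G →
      ∃ y : Fin n → Fin (n ^ cY), Function.Injective y ∧
        ∀ u v : Fin n, u ≠ v → (G.Adj u v ↔ DY (y u).val (y v).val))
    (hdecomp : ∀ n : ℕ, 1 ≤ n → ∀ G : SimpleGraph (Fin n), X n G →
      ∃ A : Set (Fin n), A.Nonempty ∧
        (∃ H : SimpleGraph (Fin A.ncard), Nonempty (G.induce A ≃g H) ∧ Y A.ncard H) ∧
        ∃ B₁ B₂ : Set (Fin n), B₁ ∪ B₂ = Aᶜ ∧ Disjoint B₁ B₂ ∧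
          (∀ u ∈ B₁, ∀ w ∈ B₂, ¬ G.Adj u w) ∧
          (∀ v ∈ A,
            ({u ∈ B₁ | G.Adj v u}.ncard ≤ d ∨ {u ∈ B₁ | ¬ G.Adj v u}.ncard ≤ d) ∧
            ({u ∈ B₂ | G.Adj v u}.ncard ≤ d ∨ {u ∈ B₂ | ¬ G.Adj v u}.ncard ≤ d))) :
    ∀ n : ℕ, ∀ G : SimpleGraph (Fin n), X n G → ∀ o : ℕ,
      ∃ ℓ : Fin n → ℕ,
        (∀ v, o ≤ fld 0 (ℓ v) ∧ fld 0 (ℓ v) < o + n) ∧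
        (∀ v, o ≤ fld 1 (ℓ v) ∧ fld 1 (ℓ v) < o + n) ∧
        (∀ v, o ≤ fld 2 (ℓ v) ∧ fld 3 (ℓ v) ≤ o + n ∧
              o ≤ fld 4 (ℓ v) ∧ fld 5 (ℓ v) ≤ o + n) ∧
        (∀ v, ℓ v < (o + n + (o + n) ^ cY + 1) ^ 2 ^ (9 + 2 * d)) ∧
        (∀ u v : Fin n, fld 0 (ℓ u) = fld 0 (ℓ v) → u = v) ∧
        (∀ u v : Fin n, u ≠ v → (G.Adj u v ↔ Dec d DY (ℓ u) (ℓ v))) := by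
  intro n
  induction n using Nat.strong_induction_on with
  | _ n ih =>
  intro G hG o
  rcases Nat.eq_zero_or_pos n with rfl | hn
  · exact ⟨fun _ => 0, fun v => v.elim0, fun v => v.elim0, fun v => v.elim0,
      fun v => v.elim0, fun u => u.elim0, fun u => u.elim0⟩
  classical
  obtain ⟨A, hAne, ⟨H, ⟨φ⟩, hYH⟩, B₁, B₂, hU, hDj, hNE, hdeg⟩ := hdecomp n hn G hG
  -- membership basics
  have hB₁A : ∀ v ∈ B₁, v ∉ A := by
    intro v hv
    have hvc : v ∈ Aᶜ := hU ▸ Set.mem_union_left _ hv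
    exact hvc
  have hB₂A : ∀ v ∈ B₂, v ∉ A := by
    intro v hv
    have hvc : v ∈ Aᶜ := hU ▸ Set.mem_union_right _ hv
    exact hvc
  have hB₁₂ : ∀ v ∈ B₁, v ∉ B₂ := fun v hv hv2 => Set.disjoint_left.mp hDj hv hv2
  have htri : ∀ v : Fin n, v ∉ A → v ∉ B₁ → v ∈ B₂ := by
    intro v hv hv1
    have : v ∈ B₁ ∪ B₂ := by rw [hU]; exact hv
    rcases this with h | h
    · exact absurd h hv1
    · exact h
  -- cardinalities
  have hc1 : A.ncard + Aᶜ.ncard = n := by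
    have := Set.ncard_add_ncard_compl A
    simpa using this
  have hc2 : B₁.ncard + B₂.ncard = Aᶜ.ncard := by
    rw [← hU]; exact (Set.ncard_union_eq hDj).symm
  have hA1 : 1 ≤ A.ncard := by
    have := (Set.ncard_pos (A.toFinite)).mpr hAne; omega
  have hsum : A.ncard + B₁.ncard + B₂.ncard = n := by omega
  -- equivalences
  have eA : ↥A ≃ Fin A.ncard := φ.toEquiv
  have hcard1 : Fintype.card ↥B₁ = B₁.ncard := by
    rw [← Nat.card_coe_set_eq, Nat.card_eq_fintype_card]
  have hcard2 : Fintype.card ↥B₂ = B₂.ncard := by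
    rw [← Nat.card_coe_set_eq, Nat.card_eq_fintype_card]
  have e₁ : ↥B₁ ≃ Fin B₁.ncard := Fintype.equivFinOfCardEq hcard1
  have e₂ : ↥B₂ ≃ Fin B₂.ncard := Fintype.equivFinOfCardEq hcard2
  -- children
  have hH₁ : X B₁.ncard (G.comap (subEmb B₁ e₁)) :=
    hX G _ hG ⟨SimpleGraph.Embedding.comap (subEmb B₁ e₁) G⟩
  have hH₂ : X B₂.ncard (G.comap (subEmb B₂ e₂)) :=
    hX G _ hG ⟨SimpleGraph.Embedding.comap (subEmb B₂ e₂) G⟩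
  obtain ⟨ℓ₁, g₁0, g₁1, g₁3, g₁4, g₁inj, g₁adj⟩ :=
    ih B₁.ncard (by omega) (G.comap (subEmb B₁ e₁)) hH₁ (o + A.ncard)
  obtain ⟨ℓ₂, g₂0, g₂1, g₂3, g₂4, g₂inj, g₂adj⟩ :=
    ih B₂.ncard (by omega) (G.comap (subEmb B₂ e₂)) hH₂ (o + A.ncard + B₁.ncard)
  -- the Y-labels on A
  have hyex : ∃ y : ↥A → ℕ, (∀ x, y x ≤ (o + n) ^ cY) ∧
      ∀ x₁ x₂ : ↥A, x₁ ≠ x₂ → (G.Adj x₁.val x₂.val ↔ DY (y x₁) (y x₂)) := by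
    rcases lt_or_ge A.ncard 2 with h2 | h2
    · refine ⟨fun _ => 0, fun _ => Nat.zero_le _, fun x₁ x₂ hne => absurd ?_ hne⟩
      apply eA.injective
      have hone : A.ncard = 1 := by omega
      have : Subsingleton (Fin A.ncard) := by rw [hone]; infer_instance
      exact Subsingleton.elim _ _
    · obtain ⟨yH, _, hyadj⟩ := hDY A.ncard h2 H hYH
      refine ⟨fun x => (yH (φ x)).val, ?_, ?_⟩
      · intro x
        show (yH (φ x)).val ≤ (o + n) ^ cY
        have hb : (yH (φ x)).val < A.ncard ^ cY := (yH (φ x)).2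
        have hle : A.ncard ^ cY ≤ (o + n) ^ cY := Nat.pow_le_pow_left (by omega) cY
        omega
      · intro x₁ x₂ hne
        have hne' : φ x₁ ≠ φ x₂ := fun h => hne (φ.injective h)
        have h0 : (SimpleGraph.induce A G).Adj x₁ x₂ ↔ G.Adj x₁.val x₂.val := by simp
        have h1 : G.Adj x₁.val x₂.val ↔ H.Adj (φ x₁) (φ x₂) :=
          h0.symm.trans (φ.map_adj_iff (v := x₁) (w := x₂)).symm
        rw [h1]
        exact hyadj _ _ hne'
  obtain ⟨yA, hyb, hyadj⟩ := hyex
  -- positions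
  let pos : Fin n → ℕ := fun v =>
    if hv : v ∈ A then o + (eA ⟨v, hv⟩).val
    else if hv1 : v ∈ B₁ then fld 0 (ℓ₁ (e₁ ⟨v, hv1⟩))
    else if hv2 : v ∈ B₂ then fld 0 (ℓ₂ (e₂ ⟨v, hv2⟩)) else 0
  have hposA : ∀ (v : Fin n) (hv : v ∈ A), pos v = o + (eA ⟨v, hv⟩).val := by
    intro v hv; simp only [pos]; rw [dif_pos hv]
  have hpos₁ : ∀ (v : Fin n) (hv : v ∈ B₁), pos v = fld 0 (ℓ₁ (e₁ ⟨v, hv⟩)) := by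
    intro v hv; simp only [pos]; rw [dif_neg (hB₁A v hv), dif_pos hv]
  have hpos₂ : ∀ (v : Fin n) (hv : v ∈ B₂), pos v = fld 0 (ℓ₂ (e₂ ⟨v, hv⟩)) := by
    intro v hv; simp only [pos]
    rw [dif_neg (hB₂A v hv), dif_neg (fun h => hB₁₂ v h hv), dif_pos hv]
  have hposA_r : ∀ (v : Fin n), v ∈ A → o ≤ pos v ∧ pos v < o + A.ncard := by
    intro v hv; rw [hposA v hv]
    have := (eA ⟨v, hv⟩).2; omega
  have hpos₁_r : ∀ (v : Fin n), v ∈ B₁ →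
      o + A.ncard ≤ pos v ∧ pos v < o + A.ncard + B₁.ncard := by
    intro v hv; rw [hpos₁ v hv]
    have := g₁0 (e₁ ⟨v, hv⟩); omega
  have hpos₂_r : ∀ (v : Fin n), v ∈ B₂ →
      o + A.ncard + B₁.ncard ≤ pos v ∧ pos v < o + n := by
    intro v hv; rw [hpos₂ v hv]
    have := g₂0 (e₂ ⟨v, hv⟩); omega
  have hposinj : ∀ u v : Fin n, pos u = pos v → u = v := by
    intro u v huv
    by_cases hu : u ∈ A
    · by_cases hv : v ∈ A
      · rw [hposA u hu, hposA v hv] at huv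
        have heq : eA ⟨u, hu⟩ = eA ⟨v, hv⟩ := Fin.ext (by omega)
        have := eA.injective heq
        exact congrArg Subtype.val this
      · by_cases hv1 : v ∈ B₁
        · have h1 := hposA_r u hu; have h2 := hpos₁_r v hv1; omega
        · have h1 := hposA_r u hu; have h2 := hpos₂_r v (htri v hv hv1); omega
    · by_cases hu1 : u ∈ B₁
      · by_cases hv : v ∈ A
        · have h1 := hpos₁_r u hu1; have h2 := hposA_r v hv; omega
        · by_cases hv1 : v ∈ B₁
          · rw [hpos₁ u hu1, hpos₁ v hv1] at huv
            have h3 := e₁.injective (g₁inj _ _ huv)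
            exact congrArg Subtype.val h3
          · have h1 := hpos₁_r u hu1; have h2 := hpos₂_r v (htri v hv hv1); omega
      · have hu2 := htri u hu hu1
        by_cases hv : v ∈ A
        · have h1 := hpos₂_r u hu2; have h2 := hposA_r v hv; omega
        · by_cases hv1 : v ∈ B₁
          · have h1 := hpos₂_r u hu2; have h2 := hpos₁_r v hv1; omega
          · have hv2 := htri v hv hv1
            rw [hpos₂ u hu2, hpos₂ v hv2] at huv
            have := g₂inj _ _ huv
            have := e₂.injective this
            exact congrArg Subtype.val this
  -- exception lists
  have hEx₁ : ∀ v : Fin n, v ∈ A → ∃ (b : ℕ) (E : ℕ → ℕ), b ≤ 1 ∧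
      (∀ i, E i = 0 ∨ ∃ w ∈ B₁, E i = pos w + 1) ∧
      (∀ w ∈ B₁, (G.Adj v w ↔ ((∃ i < d, E i = pos w + 1) ↔ b = 0))) := by
    intro v hv
    rcases (hdeg v hv).1 with hle | hle
    · obtain ⟨E, hE0, hEm⟩ := exists_exc _ hle pos
      refine ⟨0, E, by omega, ?_, ?_⟩
      · intro i
        rcases hE0 i with h | ⟨w, hw, hEw⟩
        · exact Or.inl h
        · exact Or.inr ⟨w, hw.1, hEw⟩
      · intro w hw
        constructor
        · intro hadj
          exact iff_of_true (hEm w ⟨hw, hadj⟩) rfl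
        · intro hiff
          obtain ⟨i, hi, hEi⟩ := hiff.mpr rfl
          rcases hE0 i with h0 | ⟨w', hw', hEw'⟩
          · omega
          · have hww : w' = w := hposinj _ _ (by omega)
            exact hww ▸ hw'.2
    · obtain ⟨E, hE0, hEm⟩ := exists_exc _ hle pos
      refine ⟨1, E, le_refl 1, ?_, ?_⟩
      · intro i
        rcases hE0 i with h | ⟨w, hw, hEw⟩
        · exact Or.inl h
        · exact Or.inr ⟨w, hw.1, hEw⟩
      · intro w hw
        constructor
        · intro hadj
          refine iff_of_false ?_ (by omega)
          rintro ⟨i, hi, hEi⟩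
          rcases hE0 i with h0 | ⟨w', hw', hEw'⟩
          · omega
          · have hww : w' = w := hposinj _ _ (by omega)
            exact (hww ▸ hw'.2) hadj
        · intro hiff
          by_contra hnadj
          have hex : ∃ i < d, E i = pos w + 1 := hEm w ⟨hw, hnadj⟩
          have : (1 : ℕ) = 0 := hiff.mp hex
          omega
  have hEx₂ : ∀ v : Fin n, v ∈ A → ∃ (b : ℕ) (E : ℕ → ℕ), b ≤ 1 ∧
      (∀ i, E i = 0 ∨ ∃ w ∈ B₂, E i = pos w + 1) ∧
      (∀ w ∈ B₂, (G.Adj v w ↔ ((∃ i < d, E i = pos w + 1) ↔ b = 0))) := by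
    intro v hv
    rcases (hdeg v hv).2 with hle | hle
    · obtain ⟨E, hE0, hEm⟩ := exists_exc _ hle pos
      refine ⟨0, E, by omega, ?_, ?_⟩
      · intro i
        rcases hE0 i with h | ⟨w, hw, hEw⟩
        · exact Or.inl h
        · exact Or.inr ⟨w, hw.1, hEw⟩
      · intro w hw
        constructor
        · intro hadj
          exact iff_of_true (hEm w ⟨hw, hadj⟩) rfl
        · intro hiff
          obtain ⟨i, hi, hEi⟩ := hiff.mpr rfl
          rcases hE0 i with h0 | ⟨w', hw', hEw'⟩
          · omega
          · have hww : w' = w := hposinj _ _ (by omega)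
            exact hww ▸ hw'.2
    · obtain ⟨E, hE0, hEm⟩ := exists_exc _ hle pos
      refine ⟨1, E, le_refl 1, ?_, ?_⟩
      · intro i
        rcases hE0 i with h | ⟨w, hw, hEw⟩
        · exact Or.inl h
        · exact Or.inr ⟨w, hw.1, hEw⟩
      · intro w hw
        constructor
        · intro hadj
          refine iff_of_false ?_ (by omega)
          rintro ⟨i, hi, hEi⟩
          rcases hE0 i with h0 | ⟨w', hw', hEw'⟩
          · omega
          · have hww : w' = w := hposinj _ _ (by omega)
            exact (hww ▸ hw'.2) hadj
        · intro hiff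
          by_contra hnadj
          have hex : ∃ i < d, E i = pos w + 1 := hEm w ⟨hw, hnadj⟩
          have : (1 : ℕ) = 0 := hiff.mp hex
          omega
  choose b₁f E₁f hb₁ hE₁0 hE₁adj using hEx₁
  choose b₂f E₂f hb₂ hE₂0 hE₂adj using hEx₂
  -- the labeling
  let ℓ : Fin n → ℕ := fun v =>
    if hv : v ∈ A then
      mkL d (o + (eA ⟨v, hv⟩).val) o (o + A.ncard) (o + A.ncard + B₁.ncard)
        (o + A.ncard + B₁.ncard) (o + n) (b₁f v hv) (b₂f v hv) (yA ⟨v, hv⟩)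
        (E₁f v hv) (E₂f v hv)
    else if hv1 : v ∈ B₁ then ℓ₁ (e₁ ⟨v, hv1⟩)
    else if hv2 : v ∈ B₂ then ℓ₂ (e₂ ⟨v, hv2⟩) else 0
  have hℓA : ∀ (v : Fin n) (hv : v ∈ A), ℓ v =
      mkL d (o + (eA ⟨v, hv⟩).val) o (o + A.ncard) (o + A.ncard + B₁.ncard)
        (o + A.ncard + B₁.ncard) (o + n) (b₁f v hv) (b₂f v hv) (yA ⟨v, hv⟩)
        (E₁f v hv) (E₂f v hv) := by
    intro v hv; simp only [ℓ]; rw [dif_pos hv]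
  have hℓ₁ : ∀ (v : Fin n) (hv : v ∈ B₁), ℓ v = ℓ₁ (e₁ ⟨v, hv⟩) := by
    intro v hv; simp only [ℓ]; rw [dif_neg (hB₁A v hv), dif_pos hv]
  have hℓ₂ : ∀ (v : Fin n) (hv : v ∈ B₂), ℓ v = ℓ₂ (e₂ ⟨v, hv⟩) := by
    intro v hv; simp only [ℓ]
    rw [dif_neg (hB₂A v hv), dif_neg (fun h => hB₁₂ v h hv), dif_pos hv]
  -- field values on A
  have hf1A : ∀ (v : Fin n) (hv : v ∈ A), fld 1 (ℓ v) = o := by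
    intro v hv; rw [hℓA v hv, fld_mkL1]
  have hf2A : ∀ (v : Fin n) (hv : v ∈ A), fld 2 (ℓ v) = o + A.ncard := by
    intro v hv; rw [hℓA v hv, fld_mkL2]
  have hf3A : ∀ (v : Fin n) (hv : v ∈ A), fld 3 (ℓ v) = o + A.ncard + B₁.ncard := by
    intro v hv; rw [hℓA v hv, fld_mkL3]
  have hf4A : ∀ (v : Fin n) (hv : v ∈ A), fld 4 (ℓ v) = o + A.ncard + B₁.ncard := by
    intro v hv; rw [hℓA v hv, fld_mkL4]
  have hf5A : ∀ (v : Fin n) (hv : v ∈ A), fld 5 (ℓ v) = o + n := by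
    intro v hv; rw [hℓA v hv, fld_mkL5]
  have hf6A : ∀ (v : Fin n) (hv : v ∈ A), fld 6 (ℓ v) = b₁f v hv := by
    intro v hv; rw [hℓA v hv, fld_mkL6]
  have hf7A : ∀ (v : Fin n) (hv : v ∈ A), fld 7 (ℓ v) = b₂f v hv := by
    intro v hv; rw [hℓA v hv, fld_mkL7]
  have hf8A : ∀ (v : Fin n) (hv : v ∈ A), fld 8 (ℓ v) = yA ⟨v, hv⟩ := by
    intro v hv; rw [hℓA v hv, fld_mkL8]
  have hfE₁A : ∀ (v : Fin n) (hv : v ∈ A) (i : ℕ), i < d → fld (9 + i) (ℓ v) = E₁f v hv i := by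
    intro v hv i hi; rw [hℓA v hv, fld_mkL_E1 hi]
  have hfE₂A : ∀ (v : Fin n) (hv : v ∈ A) (i : ℕ), i < d →
      fld (9 + d + i) (ℓ v) = E₂f v hv i := by
    intro v hv i hi; rw [hℓA v hv, fld_mkL_E2 hi]
  have hf0 : ∀ v : Fin n, fld 0 (ℓ v) = pos v := by
    intro v
    by_cases hv : v ∈ A
    · rw [hℓA v hv, fld_mkL0, hposA v hv]
    · by_cases hv1 : v ∈ B₁
      · rw [hℓ₁ v hv1, hpos₁ v hv1]
      · rw [hℓ₂ v (htri v hv hv1), hpos₂ v (htri v hv hv1)]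
  -- the six invariants
  refine ⟨ℓ, ?_, ?_, ?_, ?_, ?_, ?_⟩
  · -- positions in range
    intro v
    rw [hf0 v]
    by_cases hv : v ∈ A
    · have := hposA_r v hv; omega
    · by_cases hv1 : v ∈ B₁
      · have := hpos₁_r v hv1; omega
      · have := hpos₂_r v (htri v hv hv1); omega
  · -- node ids in range
    intro v
    by_cases hv : v ∈ A
    · rw [hf1A v hv]; omega
    · by_cases hv1 : v ∈ B₁
      · have := g₁1 (e₁ ⟨v, hv1⟩); rw [← hℓ₁ v hv1] at this; omega
      · have hv2 := htri v hv hv1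
        have := g₂1 (e₂ ⟨v, hv2⟩); rw [← hℓ₂ v hv2] at this; omega
  · -- intervals in range
    intro v
    by_cases hv : v ∈ A
    · rw [hf2A v hv, hf3A v hv, hf4A v hv, hf5A v hv]; omega
    · by_cases hv1 : v ∈ B₁
      · have := g₁3 (e₁ ⟨v, hv1⟩); rw [← hℓ₁ v hv1] at this; omega
      · have hv2 := htri v hv hv1
        have := g₂3 (e₂ ⟨v, hv2⟩); rw [← hℓ₂ v hv2] at this; omega
  · -- size bound
    intro v
    by_cases hv : v ∈ A
    · rw [hℓA v hv]
      apply mkL_lt (F := o + n + (o + n) ^ cY)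
      · have := (eA ⟨v, hv⟩).2; omega
      · omega
      · omega
      · omega
      · omega
      · omega
      · have := hb₁ v hv; omega
      · have := hb₂ v hv; omega
      · have := hyb ⟨v, hv⟩; omega
      · intro i
        rcases hE₁0 v hv i with h | ⟨w, hw, hEw⟩
        · omega
        · have := hpos₁_r w hw; omega
      · intro i
        rcases hE₂0 v hv i with h | ⟨w, hw, hEw⟩
        · omega
        · have := hpos₂_r w hw; omega
    · by_cases hv1 : v ∈ B₁
      · rw [hℓ₁ v hv1]
        exact lt_of_lt_of_le (g₁4 (e₁ ⟨v, hv1⟩)) (Bnd_mono cY _ (by omega))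
      · rw [hℓ₂ v (htri v hv hv1)]
        exact lt_of_lt_of_le (g₂4 (e₂ ⟨v, htri v hv hv1⟩)) (Bnd_mono cY _ (by omega))
  · -- injectivity of positions
    intro u v huv
    rw [hf0 u, hf0 v] at huv
    exact hposinj u v huv
  · -- adjacency decoding
    intro u v hne
    by_cases hu : u ∈ A
    · by_cases hv : v ∈ A
      · rw [Dec_eq1 (by rw [hf1A u hu, hf1A v hv])]
        rw [hf8A u hu, hf8A v hv]
        exact hyadj ⟨u, hu⟩ ⟨v, hv⟩ (fun h => hne (congrArg Subtype.val h))
      · by_cases hv1 : v ∈ B₁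
        · -- u ∈ A, v ∈ B₁
          have hrv := hpos₁_r v hv1
          have hv1' := g₁1 (e₁ ⟨v, hv1⟩); rw [← hℓ₁ v hv1] at hv1'
          have hne1 : fld 1 (ℓ u) ≠ fld 1 (ℓ v) := by rw [hf1A u hu]; omega
          rw [Dec_eq2 hne1 (by rw [hf2A u hu, hf0 v]; omega)
            (by rw [hf3A u hu, hf0 v]; omega)]
          rw [hf6A u hu, hf0 v]
          have hEq : (∃ i < d, fld (9 + i) (ℓ u) = pos v + 1) ↔
              (∃ i < d, E₁f u hu i = pos v + 1) := by
            constructor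
            · rintro ⟨i, hi, h⟩; exact ⟨i, hi, by rwa [hfE₁A u hu i hi] at h⟩
            · rintro ⟨i, hi, h⟩; exact ⟨i, hi, by rwa [hfE₁A u hu i hi]⟩
          rw [hEq]
          exact hE₁adj u hu v hv1
        · -- u ∈ A, v ∈ B₂
          have hv2 := htri v hv hv1
          have hrv := hpos₂_r v hv2
          have hv1' := g₂1 (e₂ ⟨v, hv2⟩); rw [← hℓ₂ v hv2] at hv1'
          have hne1 : fld 1 (ℓ u) ≠ fld 1 (ℓ v) := by rw [hf1A u hu]; omega
          have hn2 : ¬(fld 2 (ℓ u) ≤ fld 0 (ℓ v) ∧ fld 0 (ℓ v) < fld 3 (ℓ u)) := by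
            rw [hf3A u hu, hf0 v]; omega
          rw [Dec_eq3 hne1 hn2 (by rw [hf4A u hu, hf0 v]; omega)
            (by rw [hf5A u hu, hf0 v]; omega)]
          rw [hf7A u hu, hf0 v]
          have hEq : (∃ i < d, fld (9 + d + i) (ℓ u) = pos v + 1) ↔
              (∃ i < d, E₂f u hu i = pos v + 1) := by
            constructor
            · rintro ⟨i, hi, h⟩; exact ⟨i, hi, by rwa [hfE₂A u hu i hi] at h⟩
            · rintro ⟨i, hi, h⟩; exact ⟨i, hi, by rwa [hfE₂A u hu i hi]⟩
          rw [hEq]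
          exact hE₂adj u hu v hv2
    · by_cases hu1 : u ∈ B₁
      · by_cases hv : v ∈ A
        · -- u ∈ B₁, v ∈ A
          have hru := hpos₁_r u hu1
          have hrv := hposA_r v hv
          have hu1' := g₁1 (e₁ ⟨u, hu1⟩); rw [← hℓ₁ u hu1] at hu1'
          have hu3 := g₁3 (e₁ ⟨u, hu1⟩); rw [← hℓ₁ u hu1] at hu3
          have hne1 : fld 1 (ℓ u) ≠ fld 1 (ℓ v) := by rw [hf1A v hv]; omega
          have hn2 : ¬(fld 2 (ℓ u) ≤ fld 0 (ℓ v) ∧ fld 0 (ℓ v) < fld 3 (ℓ u)) := by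
            rw [hf0 v]; omega
          have hn3 : ¬(fld 4 (ℓ u) ≤ fld 0 (ℓ v) ∧ fld 0 (ℓ v) < fld 5 (ℓ u)) := by
            rw [hf0 v]; omega
          rw [G.adj_comm]
          rw [Dec_eq4 hne1 hn2 hn3 (by rw [hf2A v hv, hf0 u]; omega)
            (by rw [hf3A v hv, hf0 u]; omega)]
          rw [hf6A v hv, hf0 u]
          have hEq : (∃ i < d, fld (9 + i) (ℓ v) = pos u + 1) ↔
              (∃ i < d, E₁f v hv i = pos u + 1) := by
            constructor
            · rintro ⟨i, hi, h⟩; exact ⟨i, hi, by rwa [hfE₁A v hv i hi] at h⟩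
            · rintro ⟨i, hi, h⟩; exact ⟨i, hi, by rwa [hfE₁A v hv i hi]⟩
          rw [hEq]
          exact hE₁adj v hv u hu1
        · by_cases hv1 : v ∈ B₁
          · -- u, v ∈ B₁
            rw [hℓ₁ u hu1, hℓ₁ v hv1]
            have hne' : e₁ ⟨u, hu1⟩ ≠ e₁ ⟨v, hv1⟩ := fun h =>
              hne (congrArg Subtype.val (e₁.injective h))
            rw [← g₁adj _ _ hne']
            exact (comap_subEmb_adj G B₁ e₁ ⟨u, hu1⟩ ⟨v, hv1⟩).symm
          · -- u ∈ B₁, v ∈ B₂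
            have hv2 := htri v hv hv1
            have hru := hpos₁_r u hu1
            have hrv := hpos₂_r v hv2
            have hu1' := g₁1 (e₁ ⟨u, hu1⟩); rw [← hℓ₁ u hu1] at hu1'
            have hu3 := g₁3 (e₁ ⟨u, hu1⟩); rw [← hℓ₁ u hu1] at hu3
            have hv1' := g₂1 (e₂ ⟨v, hv2⟩); rw [← hℓ₂ v hv2] at hv1'
            have hv3 := g₂3 (e₂ ⟨v, hv2⟩); rw [← hℓ₂ v hv2] at hv3
            have h0u := hf0 u; have h0v := hf0 v
            exact iff_of_false (hNE u hu1 v hv2)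
              (Dec_false (by omega) (by omega) (by omega) (by omega) (by omega))
      · have hu2 := htri u hu hu1
        by_cases hv : v ∈ A
        · -- u ∈ B₂, v ∈ A
          have hru := hpos₂_r u hu2
          have hrv := hposA_r v hv
          have hu1' := g₂1 (e₂ ⟨u, hu2⟩); rw [← hℓ₂ u hu2] at hu1'
          have hu3 := g₂3 (e₂ ⟨u, hu2⟩); rw [← hℓ₂ u hu2] at hu3
          have hne1 : fld 1 (ℓ u) ≠ fld 1 (ℓ v) := by rw [hf1A v hv]; omega
          have hn2 : ¬(fld 2 (ℓ u) ≤ fld 0 (ℓ v) ∧ fld 0 (ℓ v) < fld 3 (ℓ u)) := by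
            rw [hf0 v]; omega
          have hn3 : ¬(fld 4 (ℓ u) ≤ fld 0 (ℓ v) ∧ fld 0 (ℓ v) < fld 5 (ℓ u)) := by
            rw [hf0 v]; omega
          have hn4 : ¬(fld 2 (ℓ v) ≤ fld 0 (ℓ u) ∧ fld 0 (ℓ u) < fld 3 (ℓ v)) := by
            rw [hf3A v hv, hf0 u]; omega
          rw [G.adj_comm]
          rw [Dec_eq5 hne1 hn2 hn3 hn4 (by rw [hf4A v hv, hf0 u]; omega)
            (by rw [hf5A v hv, hf0 u]; omega)]
          rw [hf7A v hv, hf0 u]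
          have hEq : (∃ i < d, fld (9 + d + i) (ℓ v) = pos u + 1) ↔
              (∃ i < d, E₂f v hv i = pos u + 1) := by
            constructor
            · rintro ⟨i, hi, h⟩; exact ⟨i, hi, by rwa [hfE₂A v hv i hi] at h⟩
            · rintro ⟨i, hi, h⟩; exact ⟨i, hi, by rwa [hfE₂A v hv i hi]⟩
          rw [hEq]
          exact hE₂adj v hv u hu2
        · by_cases hv1 : v ∈ B₁
          · -- u ∈ B₂, v ∈ B₁
            have hru := hpos₂_r u hu2
            have hrv := hpos₁_r v hv1
            have hu1' := g₂1 (e₂ ⟨u, hu2⟩); rw [← hℓ₂ u hu2] at hu1'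
            have hu3 := g₂3 (e₂ ⟨u, hu2⟩); rw [← hℓ₂ u hu2] at hu3
            have hv1' := g₁1 (e₁ ⟨v, hv1⟩); rw [← hℓ₁ v hv1] at hv1'
            have hv3 := g₁3 (e₁ ⟨v, hv1⟩); rw [← hℓ₁ v hv1] at hv3
            have h0u := hf0 u; have h0v := hf0 v
            refine iff_of_false (fun h => hNE v hv1 u hu2 h.symm)
              (Dec_false (by omega) (by omega) (by omega) (by omega) (by omega))
          · -- u, v ∈ B₂
            have hv2 := htri v hv hv1
            rw [hℓ₂ u hu2, hℓ₂ v hv2]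
            have hne' : e₂ ⟨u, hu2⟩ ≠ e₂ ⟨v, hv2⟩ := fun h =>
              hne (congrArg Subtype.val (e₂.injective h))
            rw [← g₂adj _ _ hne']
            exact (comap_subEmb_adj G B₂ e₂ ⟨u, hu2⟩ ⟨v, hv2⟩).symm

end S2

/-- Theorem (partial coverings, general form): if `Y` admits an implicit representation
and every graph in the hereditary class `X` has a non-empty vertex subset `A` inducing a
graph in `Y`, whose complement splits into `B₁, B₂` with no edges between them, and every
vertex of `A` has at most `d` neighbours or `d` non-neighbours in each of `B₁` and `B₂`,
then `X` admits an implicit representation. -/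
theorem statement2 (X Y : GraphClass) (hX : Hereditary X) (hY : Hereditary Y) (d : ℕ)
    (hYimp : AdmitsImplicit Y)
    (hdecomp : ∀ n : ℕ, 1 ≤ n → ∀ G : SimpleGraph (Fin n), X n G →
      ∃ A : Set (Fin n), A.Nonempty ∧
        (∃ H : SimpleGraph (Fin A.ncard), Nonempty (G.induce A ≃g H) ∧ Y A.ncard H) ∧
        ∃ B₁ B₂ : Set (Fin n), B₁ ∪ B₂ = Aᶜ ∧ Disjoint B₁ B₂ ∧
          (∀ u ∈ B₁, ∀ w ∈ B₂, ¬ G.Adj u w) ∧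
          (∀ v ∈ A,
            ({u ∈ B₁ | G.Adj v u}.ncard ≤ d ∨ {u ∈ B₁ | ¬ G.Adj v u}.ncard ≤ d) ∧
            ({u ∈ B₂ | G.Adj v u}.ncard ≤ d ∨ {u ∈ B₂ | ¬ G.Adj v u}.ncard ≤ d))) :
    AdmitsImplicit X := by
  obtain ⟨cY, DY, hDY⟩ := hYimp
  refine ⟨(cY + 4) * 2 ^ (9 + 2 * d), S2.Dec d DY, ?_⟩
  intro n hn G hG
  obtain ⟨ℓ, h0, h1, h3, h4, hinj, hadj⟩ := S2.key X Y hX d cY DY hDY hdecomp n G hG 0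
  have hb : ∀ v, ℓ v < n ^ ((cY + 4) * 2 ^ (9 + 2 * d)) := by
    intro v
    have h := h4 v
    have hF : 0 + n + (0 + n) ^ cY + 1 ≤ n ^ (cY + 4) := by
      simp only [Nat.zero_add]
      have ht : 1 ≤ n ^ cY := Nat.one_le_pow _ _ (by omega)
      have h83 : (8 : ℕ) ≤ n ^ 3 := by
        calc (8 : ℕ) = 2 ^ 3 := by norm_num
          _ ≤ n ^ 3 := Nat.pow_le_pow_left hn 3
      have h8 : 8 * n ≤ n ^ 4 := by
        calc 8 * n ≤ n ^ 3 * n := Nat.mul_le_mul_right n h83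
          _ = n ^ 4 := by rw [← pow_succ]
      have hmm : n ^ cY * (8 * n) ≤ n ^ cY * n ^ 4 := Nat.mul_le_mul_left _ h8
      have h5 : n ≤ n ^ cY * n := Nat.le_mul_of_pos_left n (by omega)
      have h6 : n ^ cY ≤ n ^ cY * n := Nat.le_mul_of_pos_right _ (by omega)
      have h7 : n ^ cY * (8 * n) = 8 * (n ^ cY * n) := by ring
      have h9 : n ^ (cY + 4) = n ^ cY * n ^ 4 := by rw [pow_add]
      omega
    calc ℓ v < (0 + n + (0 + n) ^ cY + 1) ^ 2 ^ (9 + 2 * d) := h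
      _ ≤ (n ^ (cY + 4)) ^ 2 ^ (9 + 2 * d) := Nat.pow_le_pow_left hF _
      _ = n ^ ((cY + 4) * 2 ^ (9 + 2 * d)) := by rw [← pow_mul]
  refine ⟨fun v => ⟨ℓ v, hb v⟩, ?_, ?_⟩
  · intro u v h
    exact hinj u v (by rw [show ℓ u = ℓ v from congrArg Fin.val h])
  · intro u v huv
    exact hadj u v huv
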